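/- arXiv:1411.7443 — 3 statements merged into one kernel-verified Lean document; each statement's English description precedes it below -/
import Mathlib

section
/- Let L be an n×n graph Laplacian, let α > 0, and let N : ℝⁿ → ℝ be any norm. Then the function d_sps(r,s) := ∫₀^∞ e^{−t} · N(e^{−αLt}(r − s)) dt is a metric on ℝⁿ: it is symmetric, it vanishes if and only if r = s, and it satisfies the triangle inequality d_sps(r,s) ≤ d_sps(r,z) + d_sps(z,s) for all r, s, z ∈ ℝⁿ. -/
open Matrix MeasureTheory

/-- A graph Laplacian: real symmetric matrix with nonpositive off-diagonal entries
whose rows each sum to zero. -/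
def IsGraphLaplacian {n : ℕ} (L : Matrix (Fin n) (Fin n) ℝ) : Prop :=
  L.IsSymm ∧ (∀ i j, i ≠ j → L i j ≤ 0) ∧ ∀ i, ∑ j, L i j = 0

/-- `N` is a norm on `ℝⁿ`. -/
structure IsNorm {n : ℕ} (N : (Fin n → ℝ) → ℝ) : Prop where
  nonneg : ∀ v, 0 ≤ N v
  eq_zero_iff : ∀ v, N v = 0 ↔ v = 0
  smul : ∀ (β : ℝ) (v), N (β • v) = |β| * N v
  add_le : ∀ v w, N (v + w) ≤ N v + N w

/-- The superposition distance
`d_sps(r,s) := ∫₀^∞ e^{−t} ⬝ N(e^{−αLt} (r − s)) dt`. -/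
noncomputable def spsDist {n : ℕ} (L : Matrix (Fin n) (Fin n) ℝ) (α : ℝ)
    (N : (Fin n → ℝ) → ℝ) (r s : Fin n → ℝ) : ℝ :=
  ∫ t in Set.Ioi (0 : ℝ), Real.exp (-t) * N ((NormedSpace.exp ((-(α * t)) • L)).mulVec (r - s))

section Aux
open NormedSpace

variable {n : ℕ}

private lemma hasSum_matExp (A : Matrix (Fin n) (Fin n) ℝ) :
    HasSum (fun k : ℕ => ((k.factorial : ℝ)⁻¹) • A ^ k) (NormedSpace.exp A) := by
  letI : SeminormedRing (Matrix (Fin n) (Fin n) ℝ) := Matrix.linftyOpSemiNormedRing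
  letI : NormedRing (Matrix (Fin n) (Fin n) ℝ) := Matrix.linftyOpNormedRing
  letI : NormedAlgebra ℝ (Matrix (Fin n) (Fin n) ℝ) := Matrix.linftyOpNormedAlgebra
  rw [show NormedSpace.exp A = ∑' k : ℕ, ((k.factorial : ℝ)⁻¹) • A ^ k from
    congrFun (NormedSpace.exp_eq_tsum ℝ) A]
  exact (NormedSpace.expSeries_summable' (𝕂 := ℝ) A).hasSum

private def entryHom (i j : Fin n) : Matrix (Fin n) (Fin n) ℝ →+ ℝ :=
  AddMonoidHom.mk' (fun A => A i j) (fun _ _ => rfl)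

private def rowSumHom (i : Fin n) : Matrix (Fin n) (Fin n) ℝ →+ ℝ :=
  AddMonoidHom.mk' (fun A => ∑ j, A i j) (by
    intro A B
    simp [Matrix.add_apply, Finset.sum_add_distrib])

private lemma entryHom_continuous (i j : Fin n) : Continuous (entryHom (n := n) i j) :=
  (continuous_apply j).comp (continuous_apply i)

private lemma rowSumHom_continuous (i : Fin n) : Continuous (rowSumHom (n := n) i) := by
  show Continuous fun A : Matrix (Fin n) (Fin n) ℝ => ∑ j, A i j
  exact continuous_finset_sum _ fun j _ => (continuous_apply j).comp (continuous_apply i)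

private lemma pow_entry_nonneg {A : Matrix (Fin n) (Fin n) ℝ} (hA : ∀ i j, 0 ≤ A i j) :
    ∀ (k : ℕ) (i j : Fin n), 0 ≤ (A ^ k) i j := by
  intro k
  induction k with
  | zero =>
    intro i j
    simp only [pow_zero, Matrix.one_apply]
    split <;> norm_num
  | succ k ih =>
    intro i j
    rw [pow_succ, Matrix.mul_apply]
    exact Finset.sum_nonneg fun l _ => mul_nonneg (ih i l) (hA l j)

private lemma matExp_entry_nonneg_of_nonneg {A : Matrix (Fin n) (Fin n) ℝ}
    (hA : ∀ i j, 0 ≤ A i j) (i j : Fin n) : 0 ≤ NormedSpace.exp A i j := by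
  have hs := (hasSum_matExp A).map (entryHom i j) (entryHom_continuous i j)
  refine hasSum_le (fun k => ?_) hasSum_zero hs
  show (0 : ℝ) ≤ (((k.factorial : ℝ)⁻¹) • A ^ k) i j
  rw [Matrix.smul_apply, smul_eq_mul]
  exact mul_nonneg (by positivity) (pow_entry_nonneg hA k i j)

/-- nonnegativity of exp entries assuming only off-diagonal nonnegativity -/
private lemma matExp_entry_nonneg {M : Matrix (Fin n) (Fin n) ℝ}
    (hoff : ∀ i j, i ≠ j → 0 ≤ M i j) (i j : Fin n) : 0 ≤ NormedSpace.exp M i j := by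
  letI : SeminormedRing (Matrix (Fin n) (Fin n) ℝ) := Matrix.linftyOpSemiNormedRing
  letI : NormedRing (Matrix (Fin n) (Fin n) ℝ) := Matrix.linftyOpNormedRing
  letI : NormedAlgebra ℝ (Matrix (Fin n) (Fin n) ℝ) := Matrix.linftyOpNormedAlgebra
  letI : NormedAlgebra ℚ (Matrix (Fin n) (Fin n) ℝ) := Matrix.linftyOpNormedAlgebra
  set c : ℝ := ∑ k, |M k k| with hc
  set B : Matrix (Fin n) (Fin n) ℝ := M + c • 1 with hB
  have hBnn : ∀ i j, 0 ≤ B i j := by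
    intro i j
    by_cases h : i = j
    · subst h
      have h1 : |M i i| ≤ c := Finset.single_le_sum (f := fun k => |M k k|)
        (fun k _ => abs_nonneg _) (Finset.mem_univ i)
      have h2 : -M i i ≤ |M i i| := neg_le_abs _
      simp only [hB, Matrix.add_apply, Matrix.smul_apply, Matrix.one_apply_eq, smul_eq_mul,
        mul_one]
      linarith
    · simp only [hB, Matrix.add_apply, Matrix.smul_apply, Matrix.one_apply_ne h, smul_eq_mul,
        mul_zero, add_zero]
      exact hoff i j h
  have hsplit : M = (-c) • (1 : Matrix (Fin n) (Fin n) ℝ) + B := by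
    rw [hB, neg_smul]; abel
  have hcomm : Commute ((-c) • (1 : Matrix (Fin n) (Fin n) ℝ)) B :=
    (Commute.one_left B).smul_left (-c)
  have hexp : NormedSpace.exp M
      = NormedSpace.exp ((-c) • (1 : Matrix (Fin n) (Fin n) ℝ)) * NormedSpace.exp B := by
    rw [hsplit]; exact Matrix.exp_add_of_commute _ _ hcomm
  have h1 : ((-c) • (1 : Matrix (Fin n) (Fin n) ℝ)) = algebraMap ℝ _ (-c) :=
    (Algebra.algebraMap_eq_smul_one (-c)).symm
  have h2 : NormedSpace.exp ((-c) • (1 : Matrix (Fin n) (Fin n) ℝ))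
      = Real.exp (-c) • (1 : Matrix (Fin n) (Fin n) ℝ) := by
    rw [h1, ← Algebra.algebraMap_eq_smul_one, Real.exp_eq_exp_ℝ]
    exact (NormedSpace.algebraMap_exp_comm (-c)).symm
  rw [hexp, h2, Matrix.smul_mul, Matrix.one_mul, Matrix.smul_apply, smul_eq_mul]
  exact mul_nonneg (Real.exp_pos _).le (matExp_entry_nonneg_of_nonneg hBnn i j)

private lemma matExp_rowsum_one {M : Matrix (Fin n) (Fin n) ℝ}
    (hrow : ∀ i, ∑ j, M i j = 0) (i : Fin n) : ∑ j, NormedSpace.exp M i j = 1 := by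
  have hpr : ∀ k : ℕ, k ≠ 0 → ∀ i, ∑ j, (M ^ k) i j = 0 := by
    intro k
    induction k with
    | zero => intro h; exact absurd rfl h
    | succ k ih =>
      intro _ i
      rcases Nat.eq_zero_or_pos k with hk | hk
      · subst hk; simpa using hrow i
      · rw [pow_succ']
        simp only [Matrix.mul_apply]
        rw [Finset.sum_comm]
        have : ∀ l, ∑ j, M i l * (M ^ k) l j = 0 := by
          intro l
          rw [← Finset.mul_sum, ih hk.ne' l, mul_zero]
        simp [this]
  have hs := (hasSum_matExp M).map (rowSumHom i) (rowSumHom_continuous i)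
  have heq : ∀ k : ℕ, (rowSumHom (n := n) i ∘ fun k => ((k.factorial : ℝ)⁻¹) • M ^ k) k
      = if k = 0 then (1 : ℝ) else 0 := by
    intro k
    show ∑ j, (((k.factorial : ℝ)⁻¹) • M ^ k) i j = _
    simp only [Matrix.smul_apply, smul_eq_mul, ← Finset.mul_sum]
    by_cases hk : k = 0
    · subst hk
      simp [Matrix.one_apply, Finset.sum_ite_eq]
    · rw [hpr k hk i, mul_zero, if_neg hk]
  have h2 : HasSum (fun k : ℕ => if k = 0 then (1 : ℝ) else 0)
      (rowSumHom i (NormedSpace.exp M)) :=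
    HasSum.congr_fun hs fun k => (heq k).symm
  exact h2.unique (hasSum_ite_eq 0 1)

variable {N : (Fin n → ℝ) → ℝ}

private lemma isNorm_zero (hN : IsNorm N) : N 0 = 0 := (hN.eq_zero_iff 0).2 rfl

private lemma isNorm_neg (hN : IsNorm N) (v : Fin n → ℝ) : N (-v) = N v := by
  have := hN.smul (-1) v
  simpa using this

private lemma isNorm_sum_le (hN : IsNorm N) {ι : Type*} (s : Finset ι)
    (f : ι → (Fin n → ℝ)) : N (∑ i ∈ s, f i) ≤ ∑ i ∈ s, N (f i) := by
  classical
  induction s using Finset.induction_on with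
  | empty => simp [isNorm_zero hN]
  | insert _ _ h ih =>
    rw [Finset.sum_insert h, Finset.sum_insert h]
    exact le_trans (hN.add_le _ _) (by linarith)

private lemma isNorm_le (hN : IsNorm N) (v : Fin n → ℝ) :
    N v ≤ (∑ i, N (Pi.single i (1 : ℝ))) * ‖v‖ := by
  have h1 : v = ∑ i, (v i) • (Pi.single i (1 : ℝ) : Fin n → ℝ) := by
    funext j
    simp [Finset.sum_apply, Pi.single_apply, mul_ite]
  calc N v ≤ ∑ i, N ((v i) • (Pi.single i (1 : ℝ) : Fin n → ℝ)) := by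
        nth_rewrite 1 [h1]; exact isNorm_sum_le hN _ _
    _ = ∑ i, |v i| * N (Pi.single i (1 : ℝ)) := by simp [hN.smul]
    _ ≤ ∑ i, ‖v‖ * N (Pi.single i (1 : ℝ)) := by
        refine Finset.sum_le_sum fun i _ => mul_le_mul_of_nonneg_right ?_ (hN.nonneg _)
        rw [← Real.norm_eq_abs]; exact norm_le_pi_norm v i
    _ = (∑ i, N (Pi.single i (1 : ℝ))) * ‖v‖ := by rw [← Finset.mul_sum, mul_comm]
  
private lemma isNorm_sub_le (hN : IsNorm N) (u w : Fin n → ℝ) : N u - N w ≤ N (u - w) := by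
  have := hN.add_le (u - w) w
  simp only [sub_add_cancel] at this
  linarith

private lemma isNorm_continuous (hN : IsNorm N) : Continuous N := by
  set C := ∑ i, N (Pi.single i (1 : ℝ)) with hC
  have hC0 : 0 ≤ C := Finset.sum_nonneg fun i _ => hN.nonneg _
  refine (LipschitzWith.of_dist_le_mul (K := ⟨C, hC0⟩) ?_).continuous
  intro u w
  rw [Real.dist_eq, dist_eq_norm]
  have habs : |N u - N w| ≤ N (u - w) := by
    rw [abs_sub_le_iff]
    refine ⟨isNorm_sub_le hN u w, ?_⟩
    have := isNorm_sub_le hN w u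
    rwa [show w - u = -(u - w) by abel, isNorm_neg hN] at this
  exact le_trans habs (isNorm_le hN _)

end Aux

theorem spsDist_isMetric {n : ℕ} (L : Matrix (Fin n) (Fin n) ℝ) (hL : IsGraphLaplacian L)
    (α : ℝ) (hα : 0 < α) (N : (Fin n → ℝ) → ℝ) (hN : IsNorm N) :
    (∀ r s : Fin n → ℝ, spsDist L α N r s = spsDist L α N s r) ∧
    (∀ r s : Fin n → ℝ, spsDist L α N r s = 0 ↔ r = s) ∧
    (∀ r s z : Fin n → ℝ, spsDist L α N r s ≤ spsDist L α N r z + spsDist L α N z s) := by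
  classical
  obtain ⟨hsymm, hoffd, hrows⟩ := hL
  set C := ∑ i, N (Pi.single i (1 : ℝ)) with hC
  have hC0 : 0 ≤ C := Finset.sum_nonneg fun i _ => hN.nonneg _
  set P : ℝ → Matrix (Fin n) (Fin n) ℝ := fun t => NormedSpace.exp ((-(α * t)) • L) with hP
  have hPnn : ∀ t, 0 ≤ t → ∀ i j, 0 ≤ P t i j := by
    intro t ht i j
    refine matExp_entry_nonneg (fun i j hij => ?_) i j
    simp only [Matrix.smul_apply, smul_eq_mul]
    have h1 : L i j ≤ 0 := hoffd i j hij
    nlinarith [mul_nonneg hα.le ht]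
  have hProw : ∀ t, ∀ i, ∑ j, P t i j = 1 := by
    intro t i
    refine matExp_rowsum_one (fun i => ?_) i
    simp only [Matrix.smul_apply, smul_eq_mul, ← Finset.mul_sum]
    rw [hrows i, mul_zero]
  have hcontr : ∀ t, 0 ≤ t → ∀ v : Fin n → ℝ, ‖P t *ᵥ v‖ ≤ ‖v‖ := by
    intro t ht v
    rw [pi_norm_le_iff_of_nonneg (norm_nonneg v)]
    intro i
    rw [Real.norm_eq_abs]
    have h0 : (P t *ᵥ v) i = ∑ j, P t i j * v j := rfl
    rw [h0]
    calc |∑ j, P t i j * v j| ≤ ∑ j, |P t i j * v j| := Finset.abs_sum_le_sum_abs _ _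
      _ ≤ ∑ j, P t i j * ‖v‖ := by
          refine Finset.sum_le_sum fun j _ => ?_
          rw [abs_mul, abs_of_nonneg (hPnn t ht i j)]
          refine mul_le_mul_of_nonneg_left ?_ (hPnn t ht i j)
          rw [← Real.norm_eq_abs]; exact norm_le_pi_norm v j
      _ = ‖v‖ := by rw [← Finset.sum_mul, hProw t i, one_mul]
  have hbound : ∀ v : Fin n → ℝ, ∀ t, 0 ≤ t → N (P t *ᵥ v) ≤ C * ‖v‖ := fun v t ht =>
    le_trans (isNorm_le hN _) (mul_le_mul_of_nonneg_left (hcontr t ht v) hC0)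
  set f : (Fin n → ℝ) → ℝ → ℝ := fun v t => Real.exp (-t) * N (P t *ᵥ v) with hf
  have hfc : ∀ v, Continuous (f v) := by
    intro v
    have h1 : Continuous fun t : ℝ => (-(α * t)) • L :=
      ((continuous_const.mul continuous_id).neg).smul continuous_const
    have h2 : Continuous (NormedSpace.exp : Matrix (Fin n) (Fin n) ℝ → _) := by
      letI : SeminormedRing (Matrix (Fin n) (Fin n) ℝ) := Matrix.linftyOpSemiNormedRing
      letI : NormedRing (Matrix (Fin n) (Fin n) ℝ) := Matrix.linftyOpNormedRing
      letI : NormedAlgebra ℝ (Matrix (Fin n) (Fin n) ℝ) := Matrix.linftyOpNormedAlgebra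
      letI : NormedAlgebra ℚ (Matrix (Fin n) (Fin n) ℝ) := Matrix.linftyOpNormedAlgebra
      exact NormedSpace.exp_continuous
    have h3 : Continuous fun A : Matrix (Fin n) (Fin n) ℝ => A *ᵥ v := by
      refine continuous_pi fun i => ?_
      show Continuous fun A : Matrix (Fin n) (Fin n) ℝ => ∑ j, A i j * v j
      exact continuous_finset_sum _ fun j _ =>
        (continuous_apply_apply i j).mul continuous_const
    exact (Real.continuous_exp.comp continuous_neg).mul
      ((isNorm_continuous hN).comp (h3.comp (h2.comp h1)))
  have hnonneg : ∀ v t, 0 ≤ f v t := fun v t =>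
    mul_nonneg (Real.exp_pos _).le (hN.nonneg _)
  have hint : ∀ v : Fin n → ℝ, IntegrableOn (f v) (Set.Ioi 0) := by
    intro v
    have hg : IntegrableOn (fun t => (C * ‖v‖) * Real.exp (-1 * t)) (Set.Ioi (0:ℝ)) :=
      (exp_neg_integrableOn_Ioi 0 one_pos).const_mul _
    refine Integrable.mono hg ((hfc v).aestronglyMeasurable) ?_
    filter_upwards [ae_restrict_mem measurableSet_Ioi] with t ht
    rw [Real.norm_eq_abs, abs_of_nonneg (hnonneg v t)]
    calc f v t ≤ Real.exp (-t) * (C * ‖v‖) :=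
        mul_le_mul_of_nonneg_left (hbound v t (le_of_lt ht)) (Real.exp_pos _).le
      _ ≤ ‖(C * ‖v‖) * Real.exp (-1 * t)‖ := by
          rw [neg_one_mul, Real.norm_eq_abs]
          rw [abs_of_nonneg (mul_nonneg (mul_nonneg hC0 (norm_nonneg v)) (Real.exp_pos _).le)]
          ring_nf; exact le_refl _
  have hdist : ∀ r s : Fin n → ℝ, spsDist L α N r s = ∫ t in Set.Ioi (0:ℝ), f (r - s) t :=
    fun r s => rfl
  refine ⟨?_, ?_, ?_⟩
  · intro r s
    rw [hdist, hdist]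
    congr 1
    funext t
    show Real.exp (-t) * N (P t *ᵥ (r - s)) = Real.exp (-t) * N (P t *ᵥ (s - r))
    rw [show s - r = -(r - s) by abel, Matrix.mulVec_neg, isNorm_neg hN]
  · intro r s
    constructor
    · intro h
      by_contra hrs
      have hv : r - s ≠ 0 := sub_ne_zero.mpr hrs
      have hpos : 0 < spsDist L α N r s := by
        rw [hdist,
          setIntegral_pos_iff_support_of_nonneg_ae
            (Filter.Eventually.of_forall fun t => hnonneg _ t) (hint _)]
        have hsub : Set.Ioi (0:ℝ) ⊆ Function.support (f (r - s)) := by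
          intro t ht
          have hw : P t *ᵥ (r - s) ≠ 0 := by
            intro h0
            have hde : NormedSpace.exp (-((-(α * t)) • L)) * P t = 1 := by
              rw [hP]
              rw [← Matrix.exp_add_of_commute (-((-(α * t)) • L)) ((-(α * t)) • L) (Commute.neg_left (Commute.refl _)),
                neg_add_cancel, NormedSpace.exp_zero]
            have hz : r - s = 0 := by
              calc r - s = (NormedSpace.exp (-((-(α * t)) • L)) * P t) *ᵥ (r - s) := by
                    rw [hde, Matrix.one_mulVec]
                _ = NormedSpace.exp (-((-(α * t)) • L)) *ᵥ (P t *ᵥ (r - s)) :=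
                    (Matrix.mulVec_mulVec _ _ _).symm
                _ = 0 := by rw [h0, Matrix.mulVec_zero]
            exact hv hz
          have hNpos : 0 < N (P t *ᵥ (r - s)) :=
            lt_of_le_of_ne (hN.nonneg _) fun h0 => hw ((hN.eq_zero_iff _).1 h0.symm)
          exact ne_of_gt (mul_pos (Real.exp_pos _) hNpos)
        calc (0 : ENNReal) < volume (Set.Ioi (0:ℝ)) := by
              rw [Real.volume_Ioi]; exact ENNReal.zero_lt_top
          _ ≤ volume (Function.support (f (r - s)) ∩ Set.Ioi 0) :=
              measure_mono (Set.subset_inter hsub Set.Subset.rfl)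
      exact absurd h (ne_of_gt hpos)
    · intro h
      subst h
      rw [hdist]
      have : ∀ t, f (r - r) t = 0 := by
        intro t
        show Real.exp (-t) * N (P t *ᵥ (r - r)) = 0
        rw [sub_self, Matrix.mulVec_zero, isNorm_zero hN, mul_zero]
      simp only [this, integral_zero]
  · intro r s z
    rw [hdist, hdist, hdist]
    have hptw : ∀ t, f (r - s) t ≤ f (r - z) t + f (z - s) t := by
      intro t
      have hmv : P t *ᵥ (r - s) = P t *ᵥ (r - z) + P t *ᵥ (z - s) := by
        rw [← Matrix.mulVec_add, sub_add_sub_cancel]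
      show Real.exp (-t) * N (P t *ᵥ (r - s)) ≤
        Real.exp (-t) * N (P t *ᵥ (r - z)) + Real.exp (-t) * N (P t *ᵥ (z - s))
      rw [hmv, ← mul_add]
      exact mul_le_mul_of_nonneg_left (hN.add_le _ _) (Real.exp_pos _).le
    calc (∫ t in Set.Ioi (0:ℝ), f (r - s) t)
        ≤ ∫ t in Set.Ioi (0:ℝ), (f (r - z) t + f (z - s) t) :=
          integral_mono (hint _) ((hint _).add (hint _)) hptw
      _ = (∫ t in Set.Ioi (0:ℝ), f (r - z) t) + ∫ t in Set.Ioi (0:ℝ), f (z - s) t :=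
          integral_add (hint _) (hint _)
end

section
/- Let L be an n×n graph Laplacian and E an n×n real matrix such that L' = L + E is also a graph Laplacian, let p ∈ {1, 2, ∞}, and suppose ‖E‖_p ≤ ε‖L‖_p < 1 for some ε > 0, where ‖·‖_p is the operator norm induced by the vector ℓp norm. Let s, r ∈ ℝⁿ satisfy ‖s‖_p ≤ γ and ‖r‖_p ≤ γ. Then the diffusion distances (with α = 1 and input norm ℓp) computed on L and on L' satisfy |d_diff^{L'}(s,r) − d_diff^{L}(s,r)| ≤ 2γ · ε‖L‖_p / (1 − ε‖L‖_p); in particular the difference is 2γ‖L‖_p ε + o(ε) as ε → 0. -/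
open Matrix

/-- The ℓp norm of a vector in `ℝⁿ`. -/
noncomputable def lpNorm (p : ENNReal) [Fact (1 ≤ p)] {n : ℕ} (x : Fin n → ℝ) : ℝ :=
  ‖(WithLp.equiv p (Fin n → ℝ)).symm x‖

/-- The operator norm on matrices induced by the vector ℓp norm:
`‖M‖_p := sup {‖Mx‖_p : ‖x‖_p = 1}`. -/
noncomputable def lpOpNorm (p : ENNReal) [Fact (1 ≤ p)] {n : ℕ}
    (M : Matrix (Fin n) (Fin n) ℝ) : ℝ :=
  sSup ((fun x => lpNorm p (M.mulVec x)) '' {x : Fin n → ℝ | lpNorm p x = 1})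

/-- The diffusion distance with diffusion constant `α = 1` and input norm ℓp:
`d_diff^L(s,r) := ‖(I + L)⁻¹ (s − r)‖_p`. -/
noncomputable def diffDistP (p : ENNReal) [Fact (1 ≤ p)] {n : ℕ}
    (L : Matrix (Fin n) (Fin n) ℝ) (s r : Fin n → ℝ) : ℝ :=
  lpNorm p ((1 + L)⁻¹.mulVec (s - r))

section helper

lemma lpNorm_nonneg (p : ENNReal) [Fact (1 ≤ p)] {n : ℕ} (x : Fin n → ℝ) :
    0 ≤ lpNorm p x := norm_nonneg _

lemma lpNorm_eq_zero (p : ENNReal) [Fact (1 ≤ p)] {n : ℕ} {v : Fin n → ℝ}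
    (h : lpNorm p v = 0) : v = 0 := by
  have h1 : (WithLp.equiv p (Fin n → ℝ)).symm v = 0 := norm_eq_zero.mp h
  have h2 : (WithLp.equiv p (Fin n → ℝ)).symm v = (WithLp.equiv p (Fin n → ℝ)).symm 0 := by
    rw [h1, WithLp.equiv_symm_apply, WithLp.toLp_zero]
  exact (WithLp.equiv p (Fin n → ℝ)).symm.injective h2

lemma lpNorm_neg (p : ENNReal) [Fact (1 ≤ p)] {n : ℕ} (v : Fin n → ℝ) :
    lpNorm p (-v) = lpNorm p v := by
  rw [lpNorm, lpNorm, WithLp.equiv_symm_apply, WithLp.toLp_neg, norm_neg]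

lemma lpNorm_sub_le (p : ENNReal) [Fact (1 ≤ p)] {n : ℕ} (u v : Fin n → ℝ) :
    lpNorm p (u - v) ≤ lpNorm p u + lpNorm p v := by
  rw [lpNorm, lpNorm, lpNorm, WithLp.equiv_symm_apply, WithLp.toLp_sub]
  exact norm_sub_le _ _

end helper

noncomputable def toCLM (p : ENNReal) [Fact (1 ≤ p)] {n : ℕ}
    (M : Matrix (Fin n) (Fin n) ℝ) :
    WithLp p (Fin n → ℝ) →L[ℝ] WithLp p (Fin n → ℝ) :=
  LinearMap.toContinuousLinearMap
    ((WithLp.linearEquiv p ℝ (Fin n → ℝ)).symm.toLinearMap ∘ₗ M.mulVecLin ∘ₗ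
      (WithLp.linearEquiv p ℝ (Fin n → ℝ)).toLinearMap)

lemma toCLM_apply (p : ENNReal) [Fact (1 ≤ p)] {n : ℕ}
    (M : Matrix (Fin n) (Fin n) ℝ) (x : WithLp p (Fin n → ℝ)) :
    toCLM p M x = (WithLp.equiv p (Fin n → ℝ)).symm (M.mulVec (WithLp.equiv p (Fin n → ℝ) x)) :=
  rfl

lemma lpNorm_mulVec (p : ENNReal) [Fact (1 ≤ p)] {n : ℕ}
    (M : Matrix (Fin n) (Fin n) ℝ) (w : Fin n → ℝ) :
    lpNorm p (M.mulVec w) = ‖toCLM p M ((WithLp.equiv p (Fin n → ℝ)).symm w)‖ := by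
  simp [toCLM_apply, lpNorm]

lemma lpOpNorm_eq (p : ENNReal) [Fact (1 ≤ p)] {n : ℕ} (M : Matrix (Fin n) (Fin n) ℝ) :
    lpOpNorm p M = ‖toCLM p M‖ := by
  have hub : ∀ a ∈ (fun x => lpNorm p (M.mulVec x)) '' {x : Fin n → ℝ | lpNorm p x = 1},
      a ≤ ‖toCLM p M‖ := by
    rintro a ⟨x, hx, rfl⟩
    show lpNorm p (M.mulVec x) ≤ _
    rw [lpNorm_mulVec]
    calc ‖toCLM p M ((WithLp.equiv p (Fin n → ℝ)).symm x)‖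
        ≤ ‖toCLM p M‖ * ‖(WithLp.equiv p (Fin n → ℝ)).symm x‖ := (toCLM p M).le_opNorm _
      _ = ‖toCLM p M‖ := by rw [show ‖(WithLp.equiv p (Fin n → ℝ)).symm x‖ = lpNorm p x from rfl, hx, mul_one]
  refine le_antisymm (Real.sSup_le hub (norm_nonneg _)) ?_
  refine (toCLM p M).opNorm_le_bound (Real.sSup_nonneg ?_) ?_
  · rintro a ⟨x, hx, rfl⟩; exact lpNorm_nonneg p _
  · intro x
    rcases eq_or_ne x 0 with rfl | hx
    · simp
    · have hxn : ‖x‖ ≠ 0 := norm_ne_zero_iff.mpr hx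
      have hmem : lpNorm p (WithLp.equiv p (Fin n → ℝ) (‖x‖⁻¹ • x)) = 1 := by
        show ‖(WithLp.equiv p (Fin n → ℝ)).symm (WithLp.equiv p (Fin n → ℝ) (‖x‖⁻¹ • x))‖ = 1
        rw [Equiv.symm_apply_apply, norm_smul, norm_inv, norm_norm, inv_mul_cancel₀ hxn]
      have hle : lpNorm p (M.mulVec (WithLp.equiv p (Fin n → ℝ) (‖x‖⁻¹ • x))) ≤
          sSup ((fun x => lpNorm p (M.mulVec x)) '' {x : Fin n → ℝ | lpNorm p x = 1}) := by
        apply le_csSup ⟨‖toCLM p M‖, fun a ha => hub a ha⟩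
        exact ⟨_, hmem, rfl⟩
      rw [lpNorm_mulVec, Equiv.symm_apply_apply, _root_.map_smul, norm_smul, norm_inv, norm_norm] at hle
      calc ‖toCLM p M x‖ = ‖x‖ * (‖x‖⁻¹ * ‖toCLM p M x‖) := by field_simp
        _ ≤ _ * ‖x‖ := by rw [mul_comm]; exact mul_le_mul_of_nonneg_right hle (norm_nonneg _)

lemma lpNorm_one {n : ℕ} (y : Fin n → ℝ) : lpNorm 1 y = ∑ i, |y i| := by
  rw [lpNorm, PiLp.norm_eq_sum (by norm_num)]
  simp [Real.norm_eq_abs, WithLp.equiv_symm_apply, PiLp.toLp_apply]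

lemma lpNorm_two {n : ℕ} (y : Fin n → ℝ) : lpNorm 2 y = Real.sqrt (∑ i, (y i)^2) := by
  rw [lpNorm, PiLp.norm_eq_of_L2]
  simp [Real.norm_eq_abs, WithLp.equiv_symm_apply, PiLp.toLp_apply, sq_abs]

lemma lpNorm_top {n : ℕ} (y : Fin n → ℝ) : lpNorm ⊤ y = ⨆ i, |y i| := by
  rw [lpNorm, PiLp.norm_eq_ciSup]
  simp [Real.norm_eq_abs, WithLp.equiv_symm_apply, PiLp.toLp_apply]

lemma coercive {n : ℕ} (p : ENNReal) [Fact (1 ≤ p)] (hp : p = 1 ∨ p = 2 ∨ p = ⊤)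
    (L : Matrix (Fin n) (Fin n) ℝ) (hL : IsGraphLaplacian L) (y : Fin n → ℝ) :
    lpNorm p y ≤ lpNorm p ((1 + L).mulVec y) := by
  obtain ⟨hsym, hoff, hrow⟩ := hL
  have hcol : ∀ j, ∑ i, L i j = 0 := fun j => by
    simp_rw [hsym.apply]; exact hrow j
  have hdiag : ∀ i, 0 ≤ L i i := by
    intro i
    have h1 : L i i = -∑ j ∈ Finset.univ.erase i, L i j := by
      have := hrow i
      rw [← Finset.add_sum_erase _ _ (Finset.mem_univ i)] at this
      linarith
    rw [h1, neg_nonneg]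
    exact Finset.sum_nonpos fun j hj => hoff i j (Ne.symm (Finset.ne_of_mem_erase hj))
  have hmv : (1 + L).mulVec y = fun i => y i + ∑ j, L i j * y j := by
    rw [Matrix.add_mulVec, Matrix.one_mulVec]
    funext i
    simp [Matrix.mulVec, dotProduct]
  rcases hp with rfl | rfl | rfl
  · -- p = 1
    rw [lpNorm_one, lpNorm_one, hmv]
    set c : Fin n → ℝ := fun i => if 0 ≤ y i then 1 else -1 with hc
    have hcy : ∀ i, c i * y i = |y i| := by
      intro i; by_cases h : 0 ≤ y i
      · simp [hc, h, abs_of_nonneg h]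
      · simp [hc, h, abs_of_neg (lt_of_not_ge h)]
    have hcabs : ∀ i, |c i| = 1 := by
      intro i; by_cases h : 0 ≤ y i <;> simp [hc, h]
    calc ∑ i, |y i| = ∑ i, c i * y i + ∑ i, ∑ j, L i j * |y j| := by
          rw [show ∑ i, ∑ j, L i j * |y j| = ∑ j, (∑ i, L i j) * |y j| by
            rw [Finset.sum_comm]; simp [Finset.sum_mul]]
          simp [hcol, hcy]
      _ ≤ ∑ i, c i * y i + ∑ i, ∑ j, c i * (L i j * y j) := by
          apply add_le_add le_rfl
          apply Finset.sum_le_sum; intro i _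
          apply Finset.sum_le_sum; intro j _
          rcases eq_or_ne i j with rfl | hij
          · rw [show c i * (L i i * y i) = L i i * (c i * y i) by ring, hcy]
          · calc L i j * |y j| = -(|L i j| * |y j|) := by
                  rw [abs_of_nonpos (hoff i j hij)]; ring
              _ = -|c i * (L i j * y j)| := by rw [abs_mul, hcabs, one_mul, abs_mul]
              _ ≤ c i * (L i j * y j) := neg_abs_le _
      _ = ∑ i, c i * (y i + ∑ j, L i j * y j) := by
          rw [← Finset.sum_add_distrib]
          apply Finset.sum_congr rfl; intro i _
          rw [mul_add, Finset.mul_sum]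
      _ ≤ ∑ i, |y i + ∑ j, L i j * y j| := by
          gcongr with i _
          calc c i * (y i + ∑ j, L i j * y j) ≤ |c i * (y i + ∑ j, L i j * y j)| := le_abs_self _
            _ = |y i + ∑ j, L i j * y j| := by rw [abs_mul, hcabs, one_mul]
  · -- p = 2
    rw [lpNorm_two, lpNorm_two, hmv]
    apply Real.sqrt_le_sqrt
    have hpsd : 0 ≤ ∑ i, ∑ j, L i j * y i * y j := by
      have key : ∀ i j, L i j * ((y i)^2 + (y j)^2) / 2 ≤ L i j * y i * y j := by
        intro i j
        rcases eq_or_ne i j with rfl | hij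
        · ring_nf; rfl
        · have h1 : y i * y j ≤ ((y i)^2 + (y j)^2) / 2 := by nlinarith [sq_nonneg (y i - y j)]
          have h2 := hoff i j hij
          nlinarith
      have hz : ∑ i, ∑ j, L i j * ((y i)^2 + (y j)^2) / 2 = 0 := by
        have : ∀ i j, L i j * ((y i)^2 + (y j)^2) / 2
            = L i j * (y i)^2 / 2 + L i j * (y j)^2 / 2 := fun i j => by ring
        simp_rw [this, Finset.sum_add_distrib]
        have e1 : ∑ i, ∑ j, L i j * (y i)^2 / 2 = 0 := by
          simp_rw [show ∀ i j, L i j * (y i)^2/2 = (y i)^2/2 * L i j from fun i j => by ring,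
            ← Finset.mul_sum]
          simp [hrow]
        have e2 : ∑ i, ∑ j, L i j * (y j)^2 / 2 = 0 := by
          rw [Finset.sum_comm]
          simp_rw [show ∀ i j, L j i * (y i)^2/2 = (y i)^2/2 * L j i from fun i j => by ring,
            ← Finset.mul_sum]
          simp [hcol]
        rw [e1, e2, add_zero]
      calc (0:ℝ) = ∑ i, ∑ j, L i j * ((y i)^2 + (y j)^2) / 2 := hz.symm
        _ ≤ ∑ i, ∑ j, L i j * y i * y j := by gcongr with i _ j _; exact key i j
    have expand : ∑ i, (y i + ∑ j, L i j * y j)^2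
        = ∑ i, (y i)^2 + 2 * ∑ i, ∑ j, L i j * y i * y j + ∑ i, (∑ j, L i j * y j)^2 := by
      have hS : ∀ i, ∑ j, L i j * y i * y j = y i * ∑ j, L i j * y j := by
        intro i; rw [Finset.mul_sum]; apply Finset.sum_congr rfl; intro j _; ring
      have : ∀ i, (y i + ∑ j, L i j * y j)^2
          = (y i)^2 + 2 * (∑ j, L i j * y i * y j) + (∑ j, L i j * y j)^2 := by
        intro i; rw [hS]; ring
      simp_rw [this, Finset.sum_add_distrib, ← Finset.mul_sum]
    have h2 : 0 ≤ ∑ i, (∑ j, L i j * y j)^2 := Finset.sum_nonneg fun i _ => sq_nonneg _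
    rw [expand]; linarith
  · -- p = ⊤
    rcases Nat.eq_zero_or_pos n with rfl | hn
    · have : y = 0 := Subsingleton.elim _ _
      subst this
      simp [lpNorm_top]
    have : Nonempty (Fin n) := ⟨⟨0, hn⟩⟩
    rw [lpNorm_top, lpNorm_top, hmv]
    obtain ⟨i₀, _, hmax⟩ := Finset.exists_max_image Finset.univ (fun i => |y i|) ⟨⟨0, hn⟩, Finset.mem_univ _⟩
    have hmax' : ∀ i, |y i| ≤ |y i₀| := fun i => hmax i (Finset.mem_univ i)
    have step : |y i₀| ≤ |y i₀ + ∑ j, L i₀ j * y j| := by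
      have hsplit : ∑ j, L i₀ j * y j = L i₀ i₀ * y i₀ + ∑ j ∈ Finset.univ.erase i₀, L i₀ j * y j := by
        rw [← Finset.add_sum_erase _ _ (Finset.mem_univ i₀)]
      have hR : |∑ j ∈ Finset.univ.erase i₀, L i₀ j * y j| ≤ L i₀ i₀ * |y i₀| := by
        have hD : L i₀ i₀ = ∑ j ∈ Finset.univ.erase i₀, -L i₀ j := by
          have := hrow i₀
          rw [← Finset.add_sum_erase _ _ (Finset.mem_univ i₀)] at this
          rw [Finset.sum_neg_distrib]; linarith
        calc |∑ j ∈ Finset.univ.erase i₀, L i₀ j * y j|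
            ≤ ∑ j ∈ Finset.univ.erase i₀, |L i₀ j * y j| := Finset.abs_sum_le_sum_abs _ _
          _ ≤ ∑ j ∈ Finset.univ.erase i₀, -L i₀ j * |y i₀| := by
              apply Finset.sum_le_sum
              intro j hj
              have hLj := hoff i₀ j (Ne.symm (Finset.ne_of_mem_erase hj))
              rw [abs_mul, abs_of_nonpos hLj]
              exact mul_le_mul_of_nonneg_left (hmax' j) (neg_nonneg.mpr hLj)
          _ = L i₀ i₀ * |y i₀| := by rw [hD, Finset.sum_mul]
      calc |y i₀| = (1 + L i₀ i₀) * |y i₀| - L i₀ i₀ * |y i₀| := by ring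
        _ ≤ |(1 + L i₀ i₀) * y i₀| - |∑ j ∈ Finset.univ.erase i₀, L i₀ j * y j| := by
            rw [abs_mul, abs_of_nonneg (by linarith [hdiag i₀] : (0:ℝ) ≤ 1 + L i₀ i₀)]
            linarith [hR]
        _ ≤ |(1 + L i₀ i₀) * y i₀ + ∑ j ∈ Finset.univ.erase i₀, L i₀ j * y j| := by
            have := abs_add_le ((1 + L i₀ i₀) * y i₀ + ∑ j ∈ Finset.univ.erase i₀, L i₀ j * y j)
              (-(∑ j ∈ Finset.univ.erase i₀, L i₀ j * y j))
            simp only [add_neg_cancel_right, abs_neg] at this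
            linarith
        _ = |y i₀ + ∑ j, L i₀ j * y j| := by rw [hsplit]; ring_nf
    calc ⨆ i, |y i| ≤ |y i₀| := ciSup_le hmax'
      _ ≤ |y i₀ + ∑ j, L i₀ j * y j| := step
      _ ≤ ⨆ i, |y i + ∑ j, L i j * y j| := le_ciSup (Set.Finite.bddAbove (Set.finite_range (fun i => |y i + ∑ j, L i j * y j|))) i₀

lemma laplacian_det_unit {n : ℕ} (p : ENNReal) [Fact (1 ≤ p)] (hp : p = 1 ∨ p = 2 ∨ p = ⊤)
    (L : Matrix (Fin n) (Fin n) ℝ) (hL : IsGraphLaplacian L) : IsUnit (1 + L).det := by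
  rw [isUnit_iff_ne_zero]
  intro hdet
  obtain ⟨v, hv0, hv⟩ := (Matrix.exists_mulVec_eq_zero_iff).mpr hdet
  have h := coercive p hp L hL v
  rw [hv] at h
  have h0 : lpNorm p (0 : Fin n → ℝ) = 0 := by
    rw [lpNorm, WithLp.equiv_symm_apply, WithLp.toLp_zero, norm_zero]
  exact hv0 (lpNorm_eq_zero p (le_antisymm (h.trans h0.le) (lpNorm_nonneg p v)))

lemma inv_bound {n : ℕ} (p : ENNReal) [Fact (1 ≤ p)] (hp : p = 1 ∨ p = 2 ∨ p = ⊤)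
    (L : Matrix (Fin n) (Fin n) ℝ) (hL : IsGraphLaplacian L) (x : Fin n → ℝ) :
    lpNorm p ((1 + L)⁻¹.mulVec x) ≤ lpNorm p x := by
  have hunit := laplacian_det_unit p hp L hL
  have h := coercive p hp L hL ((1 + L)⁻¹.mulVec x)
  rwa [Matrix.mulVec_mulVec, Matrix.mul_nonsing_inv _ hunit, Matrix.one_mulVec] at h

lemma lpNorm_mulVec_le (p : ENNReal) [Fact (1 ≤ p)] {n : ℕ}
    (M : Matrix (Fin n) (Fin n) ℝ) (w : Fin n → ℝ) :
    lpNorm p (M.mulVec w) ≤ lpOpNorm p M * lpNorm p w := by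
  rw [lpNorm_mulVec, lpOpNorm_eq]
  exact (toCLM p M).le_opNorm _

lemma lpOpNorm_nonneg (p : ENNReal) [Fact (1 ≤ p)] {n : ℕ} (M : Matrix (Fin n) (Fin n) ℝ) :
    0 ≤ lpOpNorm p M := by rw [lpOpNorm_eq]; exact norm_nonneg _

theorem diffDist_stability {n : ℕ} (L E : Matrix (Fin n) (Fin n) ℝ)
    (hL : IsGraphLaplacian L) (hL' : IsGraphLaplacian (L + E))
    (p : ENNReal) [Fact (1 ≤ p)] (hp : p = 1 ∨ p = 2 ∨ p = ⊤)
    (ε γ : ℝ) (hε : 0 < ε)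
    (hE : lpOpNorm p E ≤ ε * lpOpNorm p L) (hsmall : ε * lpOpNorm p L < 1)
    (s r : Fin n → ℝ) (hs : lpNorm p s ≤ γ) (hr : lpNorm p r ≤ γ) :
    |diffDistP p (L + E) s r - diffDistP p L s r| ≤
      2 * γ * (ε * lpOpNorm p L) / (1 - ε * lpOpNorm p L) := by
  have hγ : 0 ≤ γ := le_trans (lpNorm_nonneg p s) hs
  have hη0 : 0 ≤ ε * lpOpNorm p L := mul_nonneg hε.le (lpOpNorm_nonneg p L)
  set A : Matrix (Fin n) (Fin n) ℝ := 1 + L with hAdef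
  set B : Matrix (Fin n) (Fin n) ℝ := 1 + (L + E) with hBdef
  have hA : IsUnit A.det := laplacian_det_unit p hp L hL
  have hB : IsUnit B.det := laplacian_det_unit p hp (L + E) hL'
  set v : Fin n → ℝ := s - r with hvdef
  have hv : lpNorm p v ≤ 2 * γ := by
    calc lpNorm p v ≤ lpNorm p s + lpNorm p r := lpNorm_sub_le p s r
      _ ≤ 2 * γ := by linarith
  have h1 : A * A⁻¹ = 1 := Matrix.mul_nonsing_inv _ hA
  have h2 : B⁻¹ * B = 1 := Matrix.nonsing_inv_mul _ hB
  have hid : B⁻¹ - A⁻¹ = B⁻¹ * ((A - B) * A⁻¹) := by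
    rw [Matrix.sub_mul, Matrix.mul_sub, h1, Matrix.mul_one, ← Matrix.mul_assoc, h2,
      Matrix.one_mul]
  have hAB : A - B = -E := by rw [hAdef, hBdef]; abel
  have key : |diffDistP p (L + E) s r - diffDistP p L s r| ≤ 2 * γ * (ε * lpOpNorm p L) := by
    have habs : |lpNorm p (B⁻¹.mulVec v) - lpNorm p (A⁻¹.mulVec v)|
        ≤ lpNorm p (B⁻¹.mulVec v - A⁻¹.mulVec v) := by
      rw [lpNorm, lpNorm, lpNorm, WithLp.equiv_symm_apply, WithLp.toLp_sub]
      exact abs_norm_sub_norm_le _ _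
    have hstep : lpNorm p (B⁻¹.mulVec v - A⁻¹.mulVec v) ≤ 2 * γ * (ε * lpOpNorm p L) := by
      calc lpNorm p (B⁻¹.mulVec v - A⁻¹.mulVec v)
          = lpNorm p ((B⁻¹ - A⁻¹).mulVec v) := by rw [Matrix.sub_mulVec]
        _ = lpNorm p (B⁻¹.mulVec (((A - B) * A⁻¹).mulVec v)) := by
            rw [hid, Matrix.mulVec_mulVec]
        _ ≤ lpNorm p (((A - B) * A⁻¹).mulVec v) := inv_bound p hp (L + E) hL' _
        _ = lpNorm p (E.mulVec (A⁻¹.mulVec v)) := by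
            rw [hAB, ← Matrix.mulVec_mulVec, Matrix.neg_mulVec, lpNorm_neg]
        _ ≤ lpOpNorm p E * lpNorm p (A⁻¹.mulVec v) := lpNorm_mulVec_le p E _
        _ ≤ (ε * lpOpNorm p L) * (2 * γ) := by
            apply mul_le_mul hE ((inv_bound p hp L hL v).trans hv) (lpNorm_nonneg p _) hη0
        _ = 2 * γ * (ε * lpOpNorm p L) := by ring
    exact le_trans (by exact habs) hstep
  calc |diffDistP p (L + E) s r - diffDistP p L s r| ≤ 2 * γ * (ε * lpOpNorm p L) := key
    _ ≤ 2 * γ * (ε * lpOpNorm p L) / (1 - ε * lpOpNorm p L) := by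
        rw [le_div_iff₀ (by linarith)]
        nlinarith [mul_nonneg (mul_nonneg hγ hη0) hη0]
end

section
/- Let L be an n×n graph Laplacian. Then I + L is invertible and its inverse (I + L)^{−1} is doubly stochastic: all entries of (I + L)^{−1} are nonnegative, and each of its rows and each of its columns sums to 1. -/
open Matrix

theorem inv_one_add_laplacian_doublyStochastic {n : ℕ} (L : Matrix (Fin n) (Fin n) ℝ)
    (hL : IsGraphLaplacian L) :
    IsUnit (1 + L) ∧
    (∀ i j, 0 ≤ (1 + L)⁻¹ i j) ∧
    (∀ i, ∑ j, (1 + L)⁻¹ i j = 1) ∧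
    (∀ j, ∑ i, (1 + L)⁻¹ i j = 1) := by
  obtain ⟨hsymm, hoff, hrow⟩ := hL
  set M : Matrix (Fin n) (Fin n) ℝ := 1 + L with hM
  -- diagonal of L is nonnegative and equals sum of |off-diagonal|
  have hdiag : ∀ k, L k k = ∑ j ∈ Finset.univ.erase k, |L k j| := by
    intro k
    have h1 : ∑ j ∈ Finset.univ.erase k, L k j = -L k k := by
      have := hrow k
      rw [← Finset.sum_erase_add _ _ (Finset.mem_univ k)] at this
      linarith
    rw [Finset.sum_congr rfl (fun j hj => abs_of_nonpos
      (hoff k j (Ne.symm (Finset.ne_of_mem_erase hj))))]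
    rw [Finset.sum_neg_distrib, h1, neg_neg]
  have hdiag_nonneg : ∀ k, 0 ≤ L k k := by
    intro k
    rw [hdiag k]
    exact Finset.sum_nonneg fun j _ => abs_nonneg _
  -- entries of M
  have hMe : ∀ i j, M i j = (if i = j then 1 else 0) + L i j := by
    intro i j; simp [hM, Matrix.one_apply]
  -- M is strictly row diagonally dominant
  have hdet : M.det ≠ 0 := by
    apply det_ne_zero_of_sum_row_lt_diag
    intro k
    have h1 : ∑ j ∈ Finset.univ.erase k, ‖M k j‖ = L k k := by
      rw [hdiag k]
      refine Finset.sum_congr rfl fun j hj => ?_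
      have hjk : k ≠ j := Ne.symm (Finset.ne_of_mem_erase hj)
      rw [hMe k j, if_neg hjk, zero_add, Real.norm_eq_abs]
    have h2 : ‖M k k‖ = 1 + L k k := by
      rw [hMe k k, if_pos rfl, Real.norm_eq_abs, abs_of_nonneg (by linarith [hdiag_nonneg k])]
    rw [h1, h2]; linarith
  have hunit : IsUnit M := by
    rw [Matrix.isUnit_iff_isUnit_det]; exact isUnit_iff_ne_zero.mpr hdet
  -- minimum principle: if M.mulVec x ≥ 0 then x ≥ 0
  have hmin : ∀ x : Fin n → ℝ, (∀ i, 0 ≤ M.mulVec x i) → ∀ i, 0 ≤ x i := by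
    intro x hx i
    obtain ⟨k, -, hk⟩ := Finset.exists_min_image Finset.univ x ⟨i, Finset.mem_univ i⟩
    have hk' : ∀ j, x k ≤ x j := fun j => hk j (Finset.mem_univ j)
    by_contra hneg
    push_neg at hneg
    have hxk : x k < 0 := lt_of_le_of_lt (hk' i) hneg
    have h1 : M.mulVec x k = x k + ∑ j, L k j * x j := by
      simp only [Matrix.mulVec, dotProduct, hMe]
      rw [Finset.sum_congr rfl fun j _ => add_mul _ _ _, Finset.sum_add_distrib]
      congr 1
      simp [Finset.sum_ite_eq]
    have h2 : ∑ j, L k j * x j = ∑ j, L k j * (x j - x k) := by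
      have : ∑ j, L k j * (x j - x k) = ∑ j, L k j * x j - (∑ j, L k j) * x k := by
        rw [Finset.sum_mul, ← Finset.sum_sub_distrib]; exact Finset.sum_congr rfl fun j _ => by ring
      rw [this, hrow k]; ring
    have h3 : ∑ j, L k j * (x j - x k) ≤ 0 := by
      apply Finset.sum_nonpos
      intro j _
      rcases eq_or_ne k j with rfl | hne
      · simp
      · exact mul_nonpos_of_nonpos_of_nonneg (hoff k j hne) (by linarith [hk' j])
    have := hx k
    rw [h1, h2] at this
    linarith
  -- nonnegativity of inverse entries
  have hnonneg : ∀ i j, 0 ≤ M⁻¹ i j := by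
    intro i j
    apply hmin (fun i => M⁻¹ i j) _ i
    intro i'
    have : M.mulVec (fun i => M⁻¹ i j) i' = (M * M⁻¹) i' j := by
      simp [Matrix.mulVec, dotProduct, Matrix.mul_apply]
    rw [this, Matrix.mul_nonsing_inv M (isUnit_iff_ne_zero.mpr hdet)]
    rw [Matrix.one_apply]
    split <;> norm_num
  -- row sums of inverse
  have hrowsum : ∀ i, ∑ j, M⁻¹ i j = 1 := by
    intro i
    have h1 : ∑ j, (M⁻¹ * M) i j = 1 := by
      rw [Matrix.nonsing_inv_mul M (isUnit_iff_ne_zero.mpr hdet)]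
      simp [Matrix.one_apply]
    have h2 : ∑ j, (M⁻¹ * M) i j = ∑ k, M⁻¹ i k := by
      simp only [Matrix.mul_apply]
      rw [Finset.sum_comm]
      refine Finset.sum_congr rfl fun k _ => ?_
      rw [← Finset.mul_sum]
      have : ∑ j, M k j = 1 := by
        rw [Finset.sum_congr rfl fun j _ => hMe k j, Finset.sum_add_distrib, hrow k]
        simp [Finset.sum_ite_eq]
      rw [this, mul_one]
    rw [h2] at h1
    exact h1
  -- symmetry of inverse
  have hinvsymm : ∀ i j, M⁻¹ i j = M⁻¹ j i := by
    intro i j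
    have hMs : Mᵀ = M := by
      rw [hM, Matrix.transpose_add, Matrix.transpose_one, hsymm.eq]
    have : (M⁻¹)ᵀ = M⁻¹ := by
      rw [Matrix.transpose_nonsing_inv, hMs]
    exact congrFun (congrFun this.symm i) j
  refine ⟨hunit, hnonneg, hrowsum, fun j => ?_⟩
  rw [Finset.sum_congr rfl fun i _ => hinvsymm i j]
  exact hrowsum j
end
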